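/- Let m ∈ M with support H = {j₁<⋯<j_s}, and for l ≥ 1 set i_n = min(l, j_n) for 1 ≤ n ≤ s, i₀ = 0, with p_{i} the vacancy numbers (p₀ = L). Then det F[j_{n+1}] - det F[j_n] = (p_{i_s}(i_{n+1} - i_n)/(p_{i_{n+1}}·p_{i_n})) · det F for 0 ≤ n ≤ s-1 (with det F[j₀] := 0), where F[k] is F with its k-th column replaced by h' = (min(j,l))_{j∈H}. -/

import Mathlib

open Finset Matrix

/-- Summand `c_{t+1} = (i_{t+1} - i_t)/(p_{i_{t+1}} p_{i_t})` (0-indexed `t`). -/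
noncomputable def ccq (p : ℕ → ℤ) (i : ℕ → ℕ) (t : ℕ) : ℚ :=
  ((i (t + 1) : ℚ) - (i t : ℚ)) / ((p (i (t + 1)) : ℚ) * (p (i t) : ℚ))

/-- The explicit solution `x_b` of `F x = h'`. -/
noncomputable def Xq (p : ℕ → ℤ) (i : ℕ → ℕ) (s b : ℕ) : ℚ :=
  (p (i s) : ℚ) * ∑ t ∈ Finset.range (b + 1), ccq p i t

private lemma dsum_swap (f : ℕ → ℕ → ℚ) (n : ℕ) :
    ∑ b ∈ Finset.range n, ∑ t ∈ Finset.range (b + 1), f b t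
      = ∑ t ∈ Finset.range n, ∑ b ∈ Finset.Ico t n, f b t := by
  induction n with
  | zero => simp
  | succ n ih =>
    have h1 : ∑ t ∈ Finset.range n, ∑ b ∈ Finset.Ico t (n + 1), f b t
        = ∑ t ∈ Finset.range n, (∑ b ∈ Finset.Ico t n, f b t + f n t) := by
      refine Finset.sum_congr rfl fun t ht => ?_
      exact Finset.sum_Ico_succ_top (Nat.le_of_lt (Finset.mem_range.mp ht)) _
    have h2 : ∑ b ∈ Finset.Ico n (n + 1), f b n = f n n := by
      rw [Nat.Ico_succ_singleton, Finset.sum_singleton]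
    conv_lhs => rw [Finset.sum_range_succ, ih, Finset.sum_range_succ]
    conv_rhs => rw [Finset.sum_range_succ, h1, h2, Finset.sum_add_distrib]
    ring

private lemma main_row (s L l : ℕ) (jn mn : ℕ → ℕ) (p : ℕ → ℤ) (i : ℕ → ℕ)
    (hjmono : ∀ a b : ℕ, a ≤ b → b < s → jn a ≤ jn b)
    (hp : ∀ x, (p x : ℚ)
      = (L : ℚ) - 2 * ∑ b ∈ Finset.range s, ((min x (jn b) : ℕ) : ℚ) * ((mn b : ℕ) : ℚ))
    (hi0 : i 0 = 0) (hi : ∀ n < s, i (n + 1) = min l (jn n))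
    (hpne : ∀ n ≤ s, (p (i n) : ℚ) ≠ 0)
    (a : ℕ) (ha : a < s) :
    (p (jn a) : ℚ) * Xq p i s a
      + ∑ b ∈ Finset.range s, 2 * ((min (jn a) (jn b) : ℕ) : ℚ) * ((mn b : ℕ) : ℚ) * Xq p i s b
      = (i (a + 1) : ℚ) := by
  -- basic min facts
  have hiLe : ∀ n b : ℕ, n ≤ s → n ≤ b + 1 → b < s → min (i n) (jn b) = i n := by
    intro n b hns hnb hb
    match n with
    | 0 => simp [hi0]
    | (t+1) =>
      rw [hi t (by omega)]
      exact min_eq_left (le_trans (min_le_right _ _) (hjmono t b (by omega) hb))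
  have hiGt : ∀ n b : ℕ, n ≤ s → b < n → min (i n) (jn b) = min l (jn b) := by
    intro n b hns hbn
    match n, hbn with
    | (t+1), _ =>
      rw [hi t (by omega), min_assoc]
      congr 1
      exact min_eq_right (hjmono b t (by omega) (by omega))
  -- key1 : evolution of the vacancy numbers along i
  have key1 : ∀ t, t < s → (p (i (t+1)) : ℚ) = (p (i t) : ℚ)
      - 2 * ((i (t+1) : ℚ) - (i t : ℚ)) * ∑ b ∈ Finset.Ico t s, ((mn b : ℕ) : ℚ) := by
    intro t ht
    rw [hp (i (t+1)), hp (i t)]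
    have hsplit : ∀ g : ℕ → ℚ, ∑ b ∈ Finset.range s, g b
        = ∑ b ∈ Finset.range t, g b + ∑ b ∈ Finset.Ico t s, g b :=
      fun g => (Finset.sum_range_add_sum_Ico g (le_of_lt ht)).symm
    rw [hsplit (fun b => ((min (i (t+1)) (jn b) : ℕ) : ℚ) * ((mn b : ℕ) : ℚ)),
        hsplit (fun b => ((min (i t) (jn b) : ℕ) : ℚ) * ((mn b : ℕ) : ℚ))]
    have e1 : ∑ b ∈ Finset.range t, ((min (i (t+1)) (jn b) : ℕ) : ℚ) * ((mn b : ℕ) : ℚ)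
        = ∑ b ∈ Finset.range t, ((min (i t) (jn b) : ℕ) : ℚ) * ((mn b : ℕ) : ℚ) := by
      refine Finset.sum_congr rfl fun b hb => ?_
      have hb' := Finset.mem_range.mp hb
      rw [hiGt (t+1) b (by omega) (by omega), hiGt t b (by omega) hb']
    have e2 : ∑ b ∈ Finset.Ico t s, ((min (i (t+1)) (jn b) : ℕ) : ℚ) * ((mn b : ℕ) : ℚ)
        = (i (t+1) : ℚ) * ∑ b ∈ Finset.Ico t s, ((mn b : ℕ) : ℚ) := by
      rw [Finset.mul_sum]
      refine Finset.sum_congr rfl fun b hb => ?_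
      obtain ⟨h1, h2⟩ := Finset.mem_Ico.mp hb
      rw [hiLe (t+1) b (by omega) (by omega) h2]
    have e3 : ∑ b ∈ Finset.Ico t s, ((min (i t) (jn b) : ℕ) : ℚ) * ((mn b : ℕ) : ℚ)
        = (i t : ℚ) * ∑ b ∈ Finset.Ico t s, ((mn b : ℕ) : ℚ) := by
      rw [Finset.mul_sum]
      refine Finset.sum_congr rfl fun b hb => ?_
      obtain ⟨h1, h2⟩ := Finset.mem_Ico.mp hb
      rw [hiLe t b (by omega) (by omega) h2]
    rw [e1, e2, e3]
    ring
  -- key2 : partial fractions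
  have key2 : ∀ t, t < s → 2 * ccq p i t * (∑ b ∈ Finset.Ico t s, ((mn b : ℕ) : ℚ))
      = 1 / (p (i (t+1)) : ℚ) - 1 / (p (i t) : ℚ) := by
    intro t ht
    have h1 := hpne (t+1) (by omega)
    have h0 := hpne t (by omega)
    have hk := key1 t ht
    unfold ccq
    field_simp
    linear_combination hk
  -- key3 : telescoping summand
  have key3 : ∀ t, t < s → ccq p i t * ((p (i t) : ℚ)
        + 2 * (i t : ℚ) * (∑ b ∈ Finset.Ico t s, ((mn b : ℕ) : ℚ)))
      = (i (t+1) : ℚ) / (p (i (t+1)) : ℚ) - (i t : ℚ) / (p (i t) : ℚ) := by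
    intro t ht
    have h1 := hpne (t+1) (by omega)
    have h0 := hpne t (by omega)
    have hk := key1 t ht
    unfold ccq
    field_simp
    linear_combination ((i t : ℚ)) * hk
  -- key6 : closed form of P t
  have key6 : ∀ t, t ≤ s → (p (i t) : ℚ)
      = (L : ℚ) - 2 * (∑ b ∈ Finset.range t, ((i (b+1) : ℕ) : ℚ) * ((mn b : ℕ) : ℚ))
        - 2 * (i t : ℚ) * (∑ b ∈ Finset.Ico t s, ((mn b : ℕ) : ℚ)) := by
    intro t ht
    rw [hp (i t)]
    have hsplit : ∀ g : ℕ → ℚ, ∑ b ∈ Finset.range s, g b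
        = ∑ b ∈ Finset.range t, g b + ∑ b ∈ Finset.Ico t s, g b :=
      fun g => (Finset.sum_range_add_sum_Ico g ht).symm
    rw [hsplit (fun b => ((min (i t) (jn b) : ℕ) : ℚ) * ((mn b : ℕ) : ℚ))]
    have e1 : ∑ b ∈ Finset.range t, ((min (i t) (jn b) : ℕ) : ℚ) * ((mn b : ℕ) : ℚ)
        = ∑ b ∈ Finset.range t, ((i (b+1) : ℕ) : ℚ) * ((mn b : ℕ) : ℚ) := by
      refine Finset.sum_congr rfl fun b hb => ?_
      have hb' := Finset.mem_range.mp hb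
      rw [hiGt t b ht hb', ← hi b (by omega)]
    have e2 : ∑ b ∈ Finset.Ico t s, ((min (i t) (jn b) : ℕ) : ℚ) * ((mn b : ℕ) : ℚ)
        = (i t : ℚ) * ∑ b ∈ Finset.Ico t s, ((mn b : ℕ) : ℚ) := by
      rw [Finset.mul_sum]
      refine Finset.sum_congr rfl fun b hb => ?_
      obtain ⟨h1, h2⟩ := Finset.mem_Ico.mp hb
      rw [hiLe t b ht (by omega) h2]
    rw [e1, e2]
    ring
  -- key5 : below a jump, i and j agree
  have key5 : ∀ t, t ≤ a → ccq p i t ≠ 0 → ∀ b, b < t → jn b = i (b+1) := by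
    intro t hta hcc b hbt
    match t, hbt with
    | (u+1), _ =>
      have hus : u + 1 < s := by omega
      have hne : i (u+2) ≠ i (u+1) := by
        intro he
        apply hcc
        unfold ccq
        rw [show u + 1 + 1 = u + 2 from rfl, he]
        simp
      have hul : jn u < l := by
        by_contra hge
        push_neg at hge
        apply hne
        rw [hi (u+1) hus, hi u (by omega)]
        rw [min_eq_left (le_trans hge (hjmono u (u+1) (by omega) hus)), min_eq_left hge]
      have hbu : jn b ≤ jn u := hjmono b u (by omega) (by omega)
      rw [hi b (by omega)]
      exact (min_eq_right (le_of_lt (lt_of_le_of_lt hbu hul))).symm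
  -- key7 : if the cap is active at a, P_{a+1} = P_s
  have key7 : i (a+1) ≠ jn a → i (a+1) = i s := by
    intro hne
    have h1 : i (a+1) = min l (jn a) := hi a ha
    have hla : l < jn a := by
      by_contra h
      push_neg at h
      exact hne (h1.trans (min_eq_right h))
    have h2 : i (a+1) = l := h1.trans (min_eq_left hla.le)
    obtain ⟨u, hu⟩ : ∃ u, s = u + 1 := ⟨s - 1, by omega⟩
    have h3 : i s = l := by
      rw [hu, hi u (by omega)]
      exact min_eq_left (le_trans hla.le (hjmono a u (by omega) (by omega)))
    rw [h2, h3]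
  -- Step 1 : swap the double sum
  have step1 : (∑ b ∈ Finset.range s,
        2 * ((min (jn a) (jn b) : ℕ) : ℚ) * ((mn b : ℕ) : ℚ) * Xq p i s b)
      = ∑ t ∈ Finset.range s, ∑ b ∈ Finset.Ico t s,
          (p (i s) : ℚ) * (2 * ((min (jn a) (jn b) : ℕ) : ℚ) * ((mn b : ℕ) : ℚ) * ccq p i t) := by
    rw [← dsum_swap
      (fun b t => (p (i s) : ℚ) * (2 * ((min (jn a) (jn b) : ℕ) : ℚ) * ((mn b : ℕ) : ℚ) * ccq p i t)) s]
    refine Finset.sum_congr rfl fun b _ => ?_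
    unfold Xq
    rw [Finset.mul_sum, Finset.mul_sum]
    exact Finset.sum_congr rfl fun t _ => by ring
  -- the inner sum, for t ≤ a
  have hGA : ∀ t, t ≤ a → ∑ b ∈ Finset.Ico t s,
        (p (i s) : ℚ) * (2 * ((min (jn a) (jn b) : ℕ) : ℚ) * ((mn b : ℕ) : ℚ) * ccq p i t)
      = (p (i s) : ℚ) * ccq p i t
        * (((L : ℚ) - (p (jn a) : ℚ)) - 2 * ∑ b ∈ Finset.range t, ((jn b : ℕ) : ℚ) * ((mn b : ℕ) : ℚ)) := by
    intro t hta
    have hG : ∑ b ∈ Finset.Ico t s, 2 * ((min (jn a) (jn b) : ℕ) : ℚ) * ((mn b : ℕ) : ℚ)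
        = ((L : ℚ) - (p (jn a) : ℚ)) - 2 * ∑ b ∈ Finset.range t, ((jn b : ℕ) : ℚ) * ((mn b : ℕ) : ℚ) := by
      have h4 := Finset.sum_range_add_sum_Ico
        (fun b => 2 * ((min (jn a) (jn b) : ℕ) : ℚ) * ((mn b : ℕ) : ℚ)) (show t ≤ s by omega)
      have h5 : ∑ b ∈ Finset.range s, 2 * ((min (jn a) (jn b) : ℕ) : ℚ) * ((mn b : ℕ) : ℚ)
          = 2 * ∑ b ∈ Finset.range s, ((min (jn a) (jn b) : ℕ) : ℚ) * ((mn b : ℕ) : ℚ) := by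
        rw [Finset.mul_sum]
        exact Finset.sum_congr rfl fun b _ => by ring
      have h2 := hp (jn a)
      have h3 : ∑ b ∈ Finset.range t, 2 * ((min (jn a) (jn b) : ℕ) : ℚ) * ((mn b : ℕ) : ℚ)
          = 2 * ∑ b ∈ Finset.range t, ((jn b : ℕ) : ℚ) * ((mn b : ℕ) : ℚ) := by
        rw [Finset.mul_sum]
        refine Finset.sum_congr rfl fun b hb => ?_
        have hb' := Finset.mem_range.mp hb
        rw [min_eq_right (hjmono b a (by omega) ha)]
        ring
      linear_combination h4 + h5 + h2 - h3
    calc ∑ b ∈ Finset.Ico t s,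
          (p (i s) : ℚ) * (2 * ((min (jn a) (jn b) : ℕ) : ℚ) * ((mn b : ℕ) : ℚ) * ccq p i t)
        = ((p (i s) : ℚ) * ccq p i t)
            * ∑ b ∈ Finset.Ico t s, 2 * ((min (jn a) (jn b) : ℕ) : ℚ) * ((mn b : ℕ) : ℚ) := by
          rw [Finset.mul_sum]
          exact Finset.sum_congr rfl fun b _ => by ring
      _ = _ := by rw [hG]
  -- the per-term identity, for t ≤ a
  have hterm : ∀ t ∈ Finset.range (a+1),
      (p (i s) : ℚ) * ccq p i t
        * (((L : ℚ) - (p (jn a) : ℚ)) - 2 * ∑ b ∈ Finset.range t, ((jn b : ℕ) : ℚ) * ((mn b : ℕ) : ℚ))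
      = (p (i s) : ℚ) * ((i (t+1) : ℚ) / (p (i (t+1)) : ℚ) - (i t : ℚ) / (p (i t) : ℚ))
        - (p (jn a) : ℚ) * ((p (i s) : ℚ) * ccq p i t) := by
    intro t ht
    have hta : t ≤ a := by
      have := Finset.mem_range.mp ht; omega
    have hts : t < s := by omega
    have hmain : ccq p i t * ((L : ℚ) - 2 * ∑ b ∈ Finset.range t, ((jn b : ℕ) : ℚ) * ((mn b : ℕ) : ℚ))
        = (i (t+1) : ℚ) / (p (i (t+1)) : ℚ) - (i t : ℚ) / (p (i t) : ℚ) := by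
      rcases eq_or_ne (ccq p i t) 0 with h0 | h0
      · have hnum : ((i (t+1) : ℚ)) - (i t : ℚ) = 0 := by
          have h0' := h0
          unfold ccq at h0'
          rcases div_eq_zero_iff.mp h0' with h | h
          · exact h
          · exact absurd h (mul_ne_zero (hpne (t+1) (by omega)) (hpne t (by omega)))
        have hieq : i (t+1) = i t := by
          have : ((i (t+1) : ℕ) : ℚ) = ((i t : ℕ) : ℚ) := by linarith
          exact_mod_cast this
        rw [h0, hieq]
        ring
      · have hrepl : ∑ b ∈ Finset.range t, ((jn b : ℕ) : ℚ) * ((mn b : ℕ) : ℚ)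
            = ∑ b ∈ Finset.range t, ((i (b+1) : ℕ) : ℚ) * ((mn b : ℕ) : ℚ) :=
          Finset.sum_congr rfl fun b hb => by rw [key5 t hta h0 b (Finset.mem_range.mp hb)]
        rw [hrepl]
        have h6 := key6 t (by omega)
        have h7 : (L : ℚ) - 2 * ∑ b ∈ Finset.range t, ((i (b+1) : ℕ) : ℚ) * ((mn b : ℕ) : ℚ)
            = (p (i t) : ℚ) + 2 * (i t : ℚ) * (∑ b ∈ Finset.Ico t s, ((mn b : ℕ) : ℚ)) := by
          linear_combination -h6
        rw [h7]
        exact key3 t hts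
    calc (p (i s) : ℚ) * ccq p i t
          * (((L : ℚ) - (p (jn a) : ℚ)) - 2 * ∑ b ∈ Finset.range t, ((jn b : ℕ) : ℚ) * ((mn b : ℕ) : ℚ))
        = (p (i s) : ℚ) * (ccq p i t * ((L : ℚ)
              - 2 * ∑ b ∈ Finset.range t, ((jn b : ℕ) : ℚ) * ((mn b : ℕ) : ℚ)))
          - (p (jn a) : ℚ) * ((p (i s) : ℚ) * ccq p i t) := by ring
      _ = _ := by rw [hmain]
  -- Part A : sum over t ≤ a
  have stepA : ∑ t ∈ Finset.range (a+1), ∑ b ∈ Finset.Ico t s,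
        (p (i s) : ℚ) * (2 * ((min (jn a) (jn b) : ℕ) : ℚ) * ((mn b : ℕ) : ℚ) * ccq p i t)
      = (p (i s) : ℚ) * ((i (a+1) : ℚ) / (p (i (a+1)) : ℚ))
        - (p (jn a) : ℚ) * Xq p i s a := by
    have e1 : ∀ t ∈ Finset.range (a+1), ∑ b ∈ Finset.Ico t s,
          (p (i s) : ℚ) * (2 * ((min (jn a) (jn b) : ℕ) : ℚ) * ((mn b : ℕ) : ℚ) * ccq p i t)
        = (p (i s) : ℚ) * ((i (t+1) : ℚ) / (p (i (t+1)) : ℚ) - (i t : ℚ) / (p (i t) : ℚ))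
          - (p (jn a) : ℚ) * ((p (i s) : ℚ) * ccq p i t) := by
      intro t ht
      have hta : t ≤ a := by
        have := Finset.mem_range.mp ht; omega
      rw [hGA t hta]
      exact hterm t ht
    rw [Finset.sum_congr rfl e1, Finset.sum_sub_distrib, ← Finset.mul_sum, ← Finset.mul_sum,
      ← Finset.mul_sum]
    rw [Finset.sum_range_sub (fun t => (i t : ℚ) / (p (i t) : ℚ))]
    rw [hi0]
    unfold Xq
    push_cast
    ring
  -- Part B : sum over t > a
  have stepB : ∑ t ∈ Finset.Ico (a+1) s, ∑ b ∈ Finset.Ico t s,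
        (p (i s) : ℚ) * (2 * ((min (jn a) (jn b) : ℕ) : ℚ) * ((mn b : ℕ) : ℚ) * ccq p i t)
      = (p (i s) : ℚ) * (jn a : ℚ) * (1 / (p (i s) : ℚ) - 1 / (p (i (a+1)) : ℚ)) := by
    have e1 : ∀ t ∈ Finset.Ico (a+1) s, ∑ b ∈ Finset.Ico t s,
          (p (i s) : ℚ) * (2 * ((min (jn a) (jn b) : ℕ) : ℚ) * ((mn b : ℕ) : ℚ) * ccq p i t)
        = (p (i s) : ℚ) * ((jn a : ℚ) * (1 / (p (i (t+1)) : ℚ) - 1 / (p (i t) : ℚ))) := by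
      intro t ht
      obtain ⟨ht1, ht2⟩ := Finset.mem_Ico.mp ht
      have e2 : ∑ b ∈ Finset.Ico t s,
            (p (i s) : ℚ) * (2 * ((min (jn a) (jn b) : ℕ) : ℚ) * ((mn b : ℕ) : ℚ) * ccq p i t)
          = (p (i s) : ℚ) * ((jn a : ℚ)
              * (2 * ccq p i t * (∑ b ∈ Finset.Ico t s, ((mn b : ℕ) : ℚ)))) := by
        rw [Finset.mul_sum, Finset.mul_sum, Finset.mul_sum]
        refine Finset.sum_congr rfl fun b hb => ?_
        obtain ⟨hb1, hb2⟩ := Finset.mem_Ico.mp hb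
        rw [min_eq_left (hjmono a b (by omega) hb2)]
        ring
      rw [e2, key2 t ht2]
    rw [Finset.sum_congr rfl e1, ← Finset.mul_sum, ← Finset.mul_sum]
    have tel : ∑ t ∈ Finset.Ico (a+1) s, (1 / (p (i (t+1)) : ℚ) - 1 / (p (i t) : ℚ))
        = 1 / (p (i s) : ℚ) - 1 / (p (i (a+1)) : ℚ) := by
      rw [Finset.sum_Ico_eq_sub _ (show a+1 ≤ s from ha)]
      rw [Finset.sum_range_sub (fun t => 1 / (p (i t) : ℚ)),
        Finset.sum_range_sub (fun t => 1 / (p (i t) : ℚ))]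
      ring
    rw [tel]
    ring
  -- assemble
  rw [step1, ← Finset.sum_range_add_sum_Ico _ (show a+1 ≤ s from ha), stepA, stepB]
  have hPs := hpne s le_rfl
  have hPa := hpne (a+1) (by omega)
  rcases eq_or_ne (i (a+1)) (jn a) with he | he
  · rw [← he]
    field_simp
    ring
  · have h8 : (p (i (a+1)) : ℚ) = (p (i s) : ℚ) := by rw [key7 he]
    rw [h8]
    field_simp
    ring

theorem stmt18 (L : ℕ) (hL : 0 < L) (s : ℕ) (hs : 0 < s)
    (j : Fin s → ℕ) (hj : StrictMono j) (hjpos : ∀ a, 0 < j a)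
    (m : Fin s → ℕ) (hm : ∀ a, 0 < m a)
    (l : ℕ) (hl : 1 ≤ l)
    (p : ℕ → ℤ)
    (hp : ∀ x, p x = (L : ℤ) - 2 * ∑ b, (min x (j b) : ℤ) * (m b : ℤ))
    (F : Matrix (Fin s) (Fin s) ℤ)
    (hF : ∀ a b, F a b =
      (if a = b then p (j a) else 0) + 2 * (min (j a) (j b) : ℤ) * (m b : ℤ))
    (i : ℕ → ℕ) (hi0 : i 0 = 0)
    (hi : ∀ n (hn : n < s), i (n + 1) = min l (j ⟨n, hn⟩))
    (hpne : ∀ n ≤ s, p (i n) ≠ 0)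
    (Fd : ℕ → ℤ) (hFd0 : Fd 0 = 0)
    (hFd : ∀ n (hn : n < s),
      Fd (n + 1) = (F.updateCol ⟨n, hn⟩ (fun a => (min (j a) l : ℤ))).det) :
    ∀ n < s, ((Fd (n + 1) : ℚ) - (Fd n : ℚ)) =
      ((p (i s) : ℚ) * ((i (n + 1) : ℚ) - (i n : ℚ))) /
          ((p (i (n + 1)) : ℚ) * (p (i n) : ℚ)) * (F.det : ℚ) := by
  classical
  -- ℕ-indexed versions of the data
  set jn : ℕ → ℕ := fun b => if h : b < s then j ⟨b, h⟩ else 0 with hjn_def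
  set mn : ℕ → ℕ := fun b => if h : b < s then m ⟨b, h⟩ else 0 with hmn_def
  have hjn : ∀ b : Fin s, jn b.val = j b := by
    intro b; simp [hjn_def, b.isLt]
  have hmn : ∀ b : Fin s, mn b.val = m b := by
    intro b; simp [hmn_def, b.isLt]
  have hjmono : ∀ a b : ℕ, a ≤ b → b < s → jn a ≤ jn b := by
    intro a b hab hb
    have ha : a < s := lt_of_le_of_lt hab hb
    simp only [hjn_def, dif_pos ha, dif_pos hb]
    exact hj.monotone (by exact hab)
  have hp' : ∀ x, (p x : ℚ)
      = (L : ℚ) - 2 * ∑ b ∈ Finset.range s, ((min x (jn b) : ℕ) : ℚ) * ((mn b : ℕ) : ℚ) := by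
    intro x
    have e1 : ∑ b ∈ Finset.range s, ((min x (jn b) : ℕ) : ℚ) * ((mn b : ℕ) : ℚ)
        = ∑ b : Fin s, ((min x (j b) : ℕ) : ℚ) * ((m b : ℕ) : ℚ) := by
      rw [← Fin.sum_univ_eq_sum_range (fun b => ((min x (jn b) : ℕ) : ℚ) * ((mn b : ℕ) : ℚ)) s]
      exact Finset.sum_congr rfl fun b _ => by rw [hjn b, hmn b]
    rw [e1, hp x]
    push_cast
    ring
  have hi' : ∀ n < s, i (n + 1) = min l (jn n) := by
    intro n hn; rw [hi n hn]; simp [hjn_def, hn]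
  have hpne' : ∀ n ≤ s, (p (i n) : ℚ) ≠ 0 := by
    intro n hn; exact_mod_cast Int.cast_ne_zero.mpr (hpne n hn)
  -- the matrix over ℚ and the explicit solution
  set A : Matrix (Fin s) (Fin s) ℚ := F.map (fun z : ℤ => (z : ℚ)) with hA_def
  set X : Fin s → ℚ := fun b => Xq p i s b.val with hX_def
  set hq : Fin s → ℚ := fun a => ((min (j a) l : ℕ) : ℚ) with hq_def
  have hmulvec : A *ᵥ X = hq := by
    funext a
    have key := main_row s L l jn mn p i hjmono hp' hi0 hi' hpne' a.val a.isLt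
    show ∑ b, A a b * X b = hq a
    have hAab : ∀ b, A a b = ((if a = b then (p (j a) : ℚ) else 0)
        + 2 * ((min (j a) (j b) : ℕ) : ℚ) * ((m b : ℕ) : ℚ)) := by
      intro b
      simp only [hA_def, Matrix.map_apply, hF a b]
      push_cast
      ring
    calc ∑ b, A a b * X b
        = ∑ b, ((if a = b then (p (j a) : ℚ) else 0) * X b
            + 2 * ((min (j a) (j b) : ℕ) : ℚ) * ((m b : ℕ) : ℚ) * X b) := by
          refine Finset.sum_congr rfl fun b _ => ?_
          rw [hAab b]; ring
      _ = (p (j a) : ℚ) * X a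
            + ∑ b, 2 * ((min (j a) (j b) : ℕ) : ℚ) * ((m b : ℕ) : ℚ) * X b := by
          rw [Finset.sum_add_distrib]
          congr 1
          simp [ite_mul]
      _ = (p (jn a.val) : ℚ) * Xq p i s a.val
            + ∑ b ∈ Finset.range s,
                2 * ((min (jn a.val) (jn b) : ℕ) : ℚ) * ((mn b : ℕ) : ℚ) * Xq p i s b := by
          rw [← Fin.sum_univ_eq_sum_range
            (fun b => 2 * ((min (jn a.val) (jn b) : ℕ) : ℚ) * ((mn b : ℕ) : ℚ) * Xq p i s b) s]
          rw [hjn a]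
          refine congrArg₂ _ rfl ?_
          refine Finset.sum_congr rfl fun b _ => ?_
          rw [hjn b, hmn b]
      _ = (i (a.val + 1) : ℚ) := key
      _ = hq a := by
          rw [hi a.val a.isLt]
          simp only [hq_def]
          rw [min_comm]
  have hcramer : ∀ k : Fin s, (A.updateCol k hq).det = A.det * X k := by
    have h1 : Matrix.cramer A hq = A.det • X := by
      rw [← hmulvec, Matrix.cramer_eq_adjugate_mulVec, Matrix.mulVec_mulVec,
        Matrix.adjugate_mul, Matrix.smul_mulVec, Matrix.one_mulVec]
    intro k
    have h2 := congrFun h1 k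
    rw [Matrix.cramer_apply] at h2
    simpa using h2
  have hdetA : A.det = (F.det : ℚ) := ((Int.castRingHom ℚ).map_det F).symm
  have hFdq : ∀ n (hn : n < s), (Fd (n + 1) : ℚ) = (F.det : ℚ) * Xq p i s n := by
    intro n hn
    rw [hFd n hn]
    have h3 : (((F.updateCol ⟨n, hn⟩ fun a => (min (j a) l : ℤ)).det : ℤ) : ℚ)
        = (A.updateCol ⟨n, hn⟩ hq).det := by
      rw [show (((F.updateCol ⟨n, hn⟩ fun a => (min (j a) l : ℤ)).det : ℤ) : ℚ)
          = ((F.updateCol ⟨n, hn⟩ fun a => (min (j a) l : ℤ)).map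
              (fun z : ℤ => (z : ℚ))).det from (Int.castRingHom ℚ).map_det _]
      rw [Matrix.map_updateCol]
      have hcol : ((fun z : ℤ => (z : ℚ)) ∘ (fun a : Fin s => (min (j a) l : ℤ))) = hq := by
        funext a
        simp only [Function.comp_apply, hq_def]
        push_cast
        rfl
      rw [hcol]
    rw [h3, hcramer ⟨n, hn⟩, hdetA]
  intro n hn
  match n with
  | 0 =>
    rw [hFdq 0 hn, hFd0]
    simp only [Xq, ccq]
    rw [Finset.sum_range_one]
    push_cast
    ring
  | (k + 1) =>
    rw [hFdq (k + 1) hn, hFdq k (by omega)]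
    simp only [Xq, Finset.sum_range_succ]
    simp only [ccq]
    ring
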